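/- arXiv:1109.3966 — 8 statements merged into one kernel-verified Lean document; each statement's English description precedes it below -/
import Mathlib

section
/- Let M be a vector space over ℂ, B : M → M → M a ℂ-bilinear map, φ : M → M a ℂ-linear map satisfying the Leibniz rule φ(B(a,b)) = B(φ(a),b) + B(a,φ(b)) for all a,b ∈ M, d : M → M a ℂ-linear map, and Γ ∈ M such that d(φ(A)) − φ(d(A)) = B(Γ,A) for all A ∈ M. Then for every n ≥ 1 and every A ∈ M, d(φ^n(A)) − φ^n(d(A)) = Σ_{k=1}^{n} (n choose k) • B(φ^{k-1}(Γ), φ^{n-k}(A)). -/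
private lemma sum_Icc_one_shift {M : Type*} [AddCommGroup M] (f : ℕ → M) :
    ∀ n : ℕ, ∑ k ∈ Finset.Icc 1 n, f k = ∑ j ∈ Finset.range n, f (j + 1) := by
  intro n
  induction n with
  | zero => simp
  | succ n ih =>
      rw [Finset.sum_range_succ, ← ih, Finset.sum_Icc_succ_top (by omega)]

/-- If `φ` is a derivation with respect to `B` and `d ∘ φ − φ ∘ d = B Γ ·`,
then the `n`-th iterate of `φ` satisfies the corresponding intertwining formula. -/
theorem iterate_intertwine {M : Type*} [AddCommGroup M] [Module ℂ M]
    (B : M →ₗ[ℂ] M →ₗ[ℂ] M) (φ : M →ₗ[ℂ] M)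
    (hLeib : ∀ a b : M, φ (B a b) = B (φ a) b + B a (φ b))
    (d : M →ₗ[ℂ] M) (Γ : M)
    (hΓ : ∀ A : M, d (φ A) - φ (d A) = B Γ A) :
    ∀ n : ℕ, 1 ≤ n → ∀ A : M,
      d ((⇑φ)^[n] A) - (⇑φ)^[n] (d A)
        = ∑ k ∈ Finset.Icc 1 n,
            (n.choose k) • B ((⇑φ)^[k - 1] Γ) ((⇑φ)^[n - k] A) := by
  intro n hn
  induction n, hn using Nat.le_induction with
  | base =>
      intro A
      simpa using hΓ A
  | succ n hn ih =>
      intro A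
      -- rewrite both sides via range sums
      have key : d ((⇑φ)^[n + 1] A) - (⇑φ)^[n + 1] (d A)
          = φ (d ((⇑φ)^[n] A) - (⇑φ)^[n] (d A)) + B Γ ((⇑φ)^[n] A) := by
        rw [Function.iterate_succ_apply', Function.iterate_succ_apply', map_sub]
        have hx := hΓ ((⇑φ)^[n] A)
        have : d (φ ((⇑φ)^[n] A)) = B Γ ((⇑φ)^[n] A) + φ (d ((⇑φ)^[n] A)) := by
          rw [← hx]; abel
        rw [this]; abel
      rw [key, ih A, sum_Icc_one_shift, sum_Icc_one_shift, map_sum]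
      have hterm : ∀ j ∈ Finset.range n,
          φ ((n.choose (j + 1)) • B ((⇑φ)^[j + 1 - 1] Γ) ((⇑φ)^[n - (j + 1)] A))
            = (n.choose (j + 1)) • (B ((⇑φ)^[j + 1] Γ) ((⇑φ)^[n - (j + 1)] A)
                + B ((⇑φ)^[j] Γ) ((⇑φ)^[n - j] A)) := by
        intro j hj
        rw [Finset.mem_range] at hj
        rw [map_nsmul, hLeib]
        congr 2
        · simp [← Function.iterate_succ_apply' φ j Γ]
        · rw [← Function.iterate_succ_apply' φ (n - (j + 1)) A,
            show (n - (j + 1)).succ = n - j from by omega]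
          norm_num
      rw [Finset.sum_congr rfl hterm]
      -- now a purely combinatorial sum identity
      have hsplit : ∀ j ∈ Finset.range (n + 1),
          ((n + 1).choose (j + 1)) • B ((⇑φ)^[j + 1 - 1] Γ) ((⇑φ)^[n + 1 - (j + 1)] A)
            = (n.choose j) • B ((⇑φ)^[j] Γ) ((⇑φ)^[n - j] A)
              + (n.choose (j + 1)) • B ((⇑φ)^[j] Γ) ((⇑φ)^[n - j] A) := by
        intro j hj
        rw [Nat.choose_succ_succ, add_smul]
        simp only [Nat.add_sub_cancel]
        rw [show n + 1 - (j + 1) = n - j from by omega]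
      rw [Finset.sum_congr rfl hsplit, Finset.sum_add_distrib]
      rw [Finset.sum_range_succ'
        (fun j => (n.choose j) • B ((⇑φ)^[j] Γ) ((⇑φ)^[n - j] A))]
      rw [Finset.sum_range_succ
        (fun j => (n.choose (j + 1)) • B ((⇑φ)^[j] Γ) ((⇑φ)^[n - j] A))]
      simp only [Nat.choose_zero_right, Nat.sub_zero, one_smul,
        Nat.choose_succ_self, zero_smul, add_zero, Function.iterate_zero_apply]
      simp only [smul_add]
      rw [Finset.sum_add_distrib]
      abel
end

section
/- Let M be a vector space over ℂ, B : M → M → M a ℂ-bilinear map, φ : M → M a ℂ-linear map satisfying the Leibniz rule φ(B(a,b)) = B(φ(a),b) + B(a,φ(b)) for all a,b ∈ M, d : M → M a ℂ-linear map, and Γ ∈ M such that d(Γ) = 0, d(φ(A)) − φ(d(A)) = B(Γ,A) for all A ∈ M, and B(φ^i(Γ), φ^j(Γ)) = B(φ^j(Γ), φ^i(Γ)) for all natural numbers i,j. Then for every n ≥ 2, 2 • d(φ^{n-1}(Γ)) = Σ_{k=1}^{n-1} (n choose k) • B(φ^{k-1}(Γ), φ^{n-1-k}(Γ)). -/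
/-- The Maurer–Cartan-type identity for the iterates of `φ` applied to `Γ`. -/
theorem iterate_maurer_cartan {M : Type*} [AddCommGroup M] [Module ℂ M]
    (B : M →ₗ[ℂ] M →ₗ[ℂ] M) (φ : M →ₗ[ℂ] M)
    (hLeib : ∀ a b : M, φ (B a b) = B (φ a) b + B a (φ b))
    (d : M →ₗ[ℂ] M) (Γ : M)
    (hdΓ : d Γ = 0)
    (hΓ : ∀ A : M, d (φ A) - φ (d A) = B Γ A)
    (hsymm : ∀ i j : ℕ, B ((⇑φ)^[i] Γ) ((⇑φ)^[j] Γ) = B ((⇑φ)^[j] Γ) ((⇑φ)^[i] Γ)) :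
    ∀ n : ℕ, 2 ≤ n →
      2 • d ((⇑φ)^[n - 1] Γ)
        = ∑ k ∈ Finset.Icc 1 (n - 1),
            (n.choose k) • B ((⇑φ)^[k - 1] Γ) ((⇑φ)^[n - 1 - k] Γ) := by
  have hrec : ∀ m : ℕ, d ((⇑φ)^[m + 1] Γ)
      = φ (d ((⇑φ)^[m] Γ)) + B Γ ((⇑φ)^[m] Γ) := by
    intro m
    have h := hΓ ((⇑φ)^[m] Γ)
    rw [← Function.iterate_succ_apply' φ m Γ] at h
    rw [← h]; abel
  have key : ∀ m : ℕ, 2 • d ((⇑φ)^[m + 1] Γ)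
      = ∑ k ∈ Finset.range (m + 1),
          ((m + 2).choose (k + 1)) • B ((⇑φ)^[k] Γ) ((⇑φ)^[m - k] Γ) := by
    intro m
    induction m with
    | zero =>
        have h0 := hrec 0
        simp only [Function.iterate_zero_apply, hdΓ, map_zero, zero_add,
          Function.iterate_one] at h0 ⊢
        simp [h0]
    | succ m ih =>
        have lhs : 2 • d ((⇑φ)^[m + 2] Γ)
            = 2 • B Γ ((⇑φ)^[m + 1] Γ) + φ (2 • d ((⇑φ)^[m + 1] Γ)) := by
          rw [hrec (m + 1), map_nsmul, smul_add]
          abel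
        rw [lhs, ih, map_sum]
        have hterm : ∀ k ∈ Finset.range (m + 1),
            φ (((m + 2).choose (k + 1)) • B ((⇑φ)^[k] Γ) ((⇑φ)^[m - k] Γ))
              = ((m + 2).choose (k + 1)) •
                  (B ((⇑φ)^[k + 1] Γ) ((⇑φ)^[m - k] Γ)
                    + B ((⇑φ)^[k] Γ) ((⇑φ)^[m + 1 - k] Γ)) := by
          intro k hk
          rw [Finset.mem_range] at hk
          rw [map_nsmul, hLeib, ← Function.iterate_succ_apply' φ k Γ,
            ← Function.iterate_succ_apply' φ (m - k) Γ]
          simp only [Nat.succ_eq_add_one]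
          rw [show m - k + 1 = m + 1 - k from by omega]
        rw [Finset.sum_congr rfl hterm]
        -- now work on the RHS
        have hsplit : ∑ k ∈ Finset.range (m + 1 + 1),
            ((m + 1 + 2).choose (k + 1)) • B ((⇑φ)^[k] Γ) ((⇑φ)^[m + 1 - k] Γ)
            = (∑ k ∈ Finset.range (m + 2),
                ((m + 2).choose k) • B ((⇑φ)^[k] Γ) ((⇑φ)^[m + 1 - k] Γ))
              + ∑ k ∈ Finset.range (m + 2),
                ((m + 2).choose (k + 1)) • B ((⇑φ)^[k] Γ) ((⇑φ)^[m + 1 - k] Γ) := by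
          rw [← Finset.sum_add_distrib]
          apply Finset.sum_congr rfl
          intro k _
          rw [← add_smul]
          congr 1
        rw [hsplit]
        have h1 : ∑ k ∈ Finset.range (m + 2),
            ((m + 2).choose k) • B ((⇑φ)^[k] Γ) ((⇑φ)^[m + 1 - k] Γ)
            = (∑ k ∈ Finset.range (m + 1),
                ((m + 2).choose (k + 1)) • B ((⇑φ)^[k + 1] Γ) ((⇑φ)^[m - k] Γ))
              + B ((⇑φ)^[0] Γ) ((⇑φ)^[m + 1] Γ) := by
          rw [Finset.sum_range_succ']
          simp only [Nat.choose_zero_right, one_smul, Nat.sub_zero]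
          congr 1
          apply Finset.sum_congr rfl
          intro k hk
          rw [Finset.mem_range] at hk
          rw [show m + 1 - (k + 1) = m - k from by omega]
        have h2 : ∑ k ∈ Finset.range (m + 2),
            ((m + 2).choose (k + 1)) • B ((⇑φ)^[k] Γ) ((⇑φ)^[m + 1 - k] Γ)
            = (∑ k ∈ Finset.range (m + 1),
                ((m + 2).choose (k + 1)) • B ((⇑φ)^[k] Γ) ((⇑φ)^[m + 1 - k] Γ))
              + B ((⇑φ)^[0] Γ) ((⇑φ)^[m + 1] Γ) := by
          rw [Finset.sum_range_succ]
          congr 1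
          rw [Nat.choose_self, one_smul, Nat.sub_self]
          exact hsymm (m + 1) 0
        rw [h1, h2]
        simp only [smul_add]
        rw [Finset.sum_add_distrib]
        simp only [Function.iterate_zero_apply, two_smul]
        abel
  intro n hn
  obtain ⟨m, rfl⟩ : ∃ m, n = m + 2 := ⟨n - 2, by omega⟩
  have hIcc : ∑ k ∈ Finset.Icc 1 (m + 2 - 1),
      ((m + 2).choose k) • B ((⇑φ)^[k - 1] Γ) ((⇑φ)^[m + 2 - 1 - k] Γ)
      = ∑ j ∈ Finset.range (m + 1),
          ((m + 2).choose (j + 1)) • B ((⇑φ)^[j] Γ) ((⇑φ)^[m - j] Γ) := by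
    rw [show m + 2 - 1 = m + 1 from rfl, ← Finset.Ico_add_one_right_eq_Icc,
      Finset.sum_Ico_eq_sum_range]
    apply Finset.sum_congr (by norm_num)
    intro j hj
    rw [Finset.mem_range] at hj
    rw [show 1 + j - 1 = j from by omega, show m + 1 - (1 + j) = m - j from by omega,
      Nat.add_comm 1 j]
  rw [show m + 2 - 1 = m + 1 from rfl] at hIcc ⊢
  rw [hIcc]
  exact key m
end

section
/- Let M be a vector space over ℂ, B : M → M → M a ℂ-bilinear map, φ : M → M a ℂ-linear map satisfying the Leibniz rule φ(B(a,b)) = B(φ(a),b) + B(a,φ(b)) for all a,b ∈ M, d : M → M a ℂ-linear map, and Γ ∈ M such that d(Γ) = 0, d(φ(A)) − φ(d(A)) = B(Γ,A) for all A ∈ M, and B(φ^i(Γ), φ^j(Γ)) = B(φ^j(Γ), φ^i(Γ)) for all natural numbers i,j. For n ≥ 1 define γ_n = ((−1)^{n-1} / n!) • φ^{n-1}(Γ) ∈ M. Then for every n ≥ 1, d(γ_n) + (1/2) • Σ_{j=1}^{n-1} B(γ_j, γ_{n-j}) = 0; that is, the formal power series Γ(t) = Σ_{n≥1} t^n γ_n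 satisfies the Maurer–Cartan equation d(Γ(t)) + (1/2) B(Γ(t),Γ(t)) = 0 order by order. -/
open Finset

lemma d_iterate_aux {M : Type*} [AddCommGroup M] [Module ℂ M]
    (B : M →ₗ[ℂ] M →ₗ[ℂ] M) (φ : M →ₗ[ℂ] M)
    (hLeib : ∀ a b : M, φ (B a b) = B (φ a) b + B a (φ b))
    (d : M →ₗ[ℂ] M) (Γ : M)
    (hdΓ : d Γ = 0)
    (hΓ : ∀ A : M, d (φ A) - φ (d A) = B Γ A) :
    ∀ k : ℕ, d ((⇑φ)^[k] Γ) =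
      ∑ j ∈ range k, ((k.choose (j+1) : ℂ)) • B ((⇑φ)^[j] Γ) ((⇑φ)^[k-1-j] Γ) := by
  intro k
  induction k with
  | zero => simpa using hdΓ
  | succ k ih =>
    have hstep : d ((⇑φ)^[k+1] Γ) = φ (d ((⇑φ)^[k] Γ)) + B Γ ((⇑φ)^[k] Γ) := by
      rw [Function.iterate_succ_apply']
      rw [sub_eq_iff_eq_add.mp (hΓ ((⇑φ)^[k] Γ))]
      abel
    rw [hstep, ih, map_sum]
    have key : ∀ j ∈ range k,
        φ (((k.choose (j+1) : ℂ)) • B ((⇑φ)^[j] Γ) ((⇑φ)^[k-1-j] Γ))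
          = ((k.choose (j+1) : ℂ)) • B ((⇑φ)^[j+1] Γ) ((⇑φ)^[k-1-j] Γ)
          + ((k.choose (j+1) : ℂ)) • B ((⇑φ)^[j] Γ) ((⇑φ)^[k-j] Γ) := by
      intro j hj
      rw [mem_range] at hj
      rw [map_smul, hLeib, smul_add]
      congr 2
      · rw [Function.iterate_succ_apply' ⇑φ j Γ]
      · have h1 : k - j = (k - 1 - j) + 1 := by omega
        rw [h1, Function.iterate_succ_apply']
    rw [Finset.sum_congr rfl key, Finset.sum_add_distrib]
    -- now transform the RHS
    have hR : ∑ j ∈ range (k+1), (((k+1).choose (j+1) : ℂ)) • B ((⇑φ)^[j] Γ) ((⇑φ)^[k+1-1-j] Γ)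
        = ∑ j ∈ range (k+1), ((k.choose j : ℂ)) • B ((⇑φ)^[j] Γ) ((⇑φ)^[k-j] Γ)
          + ∑ j ∈ range (k+1), ((k.choose (j+1) : ℂ)) • B ((⇑φ)^[j] Γ) ((⇑φ)^[k-j] Γ) := by
      rw [← Finset.sum_add_distrib]
      refine Finset.sum_congr rfl ?_
      intro j hj
      rw [mem_range] at hj
      have h1 : k + 1 - 1 - j = k - j := by omega
      rw [h1, ← add_smul, Nat.choose_succ_succ]
      push_cast [Nat.succ_eq_add_one]
      ring
    rw [hR]
    have hR1 : ∑ j ∈ range (k+1), ((k.choose j : ℂ)) • B ((⇑φ)^[j] Γ) ((⇑φ)^[k-j] Γ)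
        = ∑ j ∈ range k, ((k.choose (j+1) : ℂ)) • B ((⇑φ)^[j+1] Γ) ((⇑φ)^[k-1-j] Γ)
          + B Γ ((⇑φ)^[k] Γ) := by
      rw [Finset.sum_range_succ']
      congr 1
      · refine Finset.sum_congr rfl ?_
        intro j hj
        rw [mem_range] at hj
        have h1 : k - (j + 1) = k - 1 - j := by omega
        rw [h1]
      · simp
    have hR2 : ∑ j ∈ range (k+1), ((k.choose (j+1) : ℂ)) • B ((⇑φ)^[j] Γ) ((⇑φ)^[k-j] Γ)
        = ∑ j ∈ range k, ((k.choose (j+1) : ℂ)) • B ((⇑φ)^[j] Γ) ((⇑φ)^[k-j] Γ) := by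
      rw [Finset.sum_range_succ, Nat.choose_succ_self]
      simp
    rw [hR1, hR2]
    abel

lemma symm_sum_aux {M : Type*} [AddCommGroup M] [Module ℂ M]
    (B : M →ₗ[ℂ] M →ₗ[ℂ] M) (φ : M →ₗ[ℂ] M) (Γ : M)
    (hsymm : ∀ i j : ℕ, B ((⇑φ)^[i] Γ) ((⇑φ)^[j] Γ) = B ((⇑φ)^[j] Γ) ((⇑φ)^[i] Γ))
    (m : ℕ) :
    ∑ j ∈ range m, ((m.choose (j+1) : ℂ)) • B ((⇑φ)^[j] Γ) ((⇑φ)^[m-1-j] Γ)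
      = (1/2 : ℂ) • ∑ j ∈ range m, (((m+1).choose (j+1) : ℂ)) • B ((⇑φ)^[j] Γ) ((⇑φ)^[m-1-j] Γ) := by
  have hrefl : ∑ j ∈ range m, ((m.choose (j+1) : ℂ)) • B ((⇑φ)^[j] Γ) ((⇑φ)^[m-1-j] Γ)
      = ∑ j ∈ range m, ((m.choose j : ℂ)) • B ((⇑φ)^[j] Γ) ((⇑φ)^[m-1-j] Γ) := by
    rw [← Finset.sum_range_reflect (fun j =>
      ((m.choose (j+1) : ℂ)) • B ((⇑φ)^[j] Γ) ((⇑φ)^[m-1-j] Γ)) m]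
    refine Finset.sum_congr rfl ?_
    intro j hj
    rw [mem_range] at hj
    have h1 : m - 1 - j + 1 = m - j := by omega
    have h2 : m - 1 - (m - 1 - j) = j := by omega
    have h3 : m.choose (m - j) = m.choose j := by
      rw [← Nat.choose_symm (show j ≤ m by omega)]
    rw [h1, h2, h3, hsymm]
  have h2 : (2:ℂ) • ∑ j ∈ range m, ((m.choose (j+1) : ℂ)) • B ((⇑φ)^[j] Γ) ((⇑φ)^[m-1-j] Γ)
      = ∑ j ∈ range m, (((m+1).choose (j+1) : ℂ)) • B ((⇑φ)^[j] Γ) ((⇑φ)^[m-1-j] Γ) := by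
    rw [two_smul]
    nth_rewrite 2 [hrefl]
    rw [← Finset.sum_add_distrib]
    refine Finset.sum_congr rfl ?_
    intro j hj
    rw [← add_smul, Nat.choose_succ_succ]
    push_cast [Nat.succ_eq_add_one]
    ring
  rw [← h2, smul_smul]
  norm_num

/-- The formal power series `Γ(t) = ∑_{n ≥ 1} t^n γ_n` with
`γ_n = ((−1)^{n−1}/n!) • φ^{n−1} Γ` satisfies the Maurer–Cartan equation
order by order. -/
theorem maurer_cartan_series {M : Type*} [AddCommGroup M] [Module ℂ M]
    (B : M →ₗ[ℂ] M →ₗ[ℂ] M) (φ : M →ₗ[ℂ] M)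
    (hLeib : ∀ a b : M, φ (B a b) = B (φ a) b + B a (φ b))
    (d : M →ₗ[ℂ] M) (Γ : M)
    (hdΓ : d Γ = 0)
    (hΓ : ∀ A : M, d (φ A) - φ (d A) = B Γ A)
    (hsymm : ∀ i j : ℕ, B ((⇑φ)^[i] Γ) ((⇑φ)^[j] Γ) = B ((⇑φ)^[j] Γ) ((⇑φ)^[i] Γ))
    (γ : ℕ → M)
    (hγ : ∀ n : ℕ, γ n = ((-1 : ℂ) ^ (n - 1) / (n.factorial : ℂ)) • (⇑φ)^[n - 1] Γ) :
    ∀ n : ℕ, 1 ≤ n →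
      d (γ n) + (1 / 2 : ℂ) • ∑ j ∈ Finset.Icc 1 (n - 1), B (γ j) (γ (n - j)) = 0 := by
  intro n hn
  obtain ⟨m, rfl⟩ : ∃ m, n = m + 1 := ⟨n - 1, by omega⟩
  have hd := d_iterate_aux B φ hLeib d Γ hdΓ hΓ m
  have hγn : d (γ (m+1)) = ((-1:ℂ)^m / (((m+1).factorial : ℕ) : ℂ)) •
      ((1/2 : ℂ) • ∑ j ∈ range m, (((m+1).choose (j+1) : ℂ)) • B ((⇑φ)^[j] Γ) ((⇑φ)^[m-1-j] Γ)) := by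
    rw [hγ (m+1)]
    simp only [Nat.add_sub_cancel]
    rw [map_smul, hd, symm_sum_aux B φ Γ hsymm m]
  have hIcc : ∑ j ∈ Finset.Icc 1 (m+1-1), B (γ j) (γ (m+1-j))
      = ∑ i ∈ range m, (((-1:ℂ)^i * (-1:ℂ)^(m-1-i)) /
          ((((i+1).factorial : ℕ) : ℂ) * (((m-i).factorial : ℕ) : ℂ))) •
          B ((⇑φ)^[i] Γ) ((⇑φ)^[m-1-i] Γ) := by
    simp only [Nat.add_sub_cancel]
    rw [← Finset.Ico_add_one_right_eq_Icc, Finset.sum_Ico_eq_sum_range]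
    refine Finset.sum_congr (by congr 1) ?_
    intro i hi
    rw [mem_range] at hi
    have e1 : m + 1 - (1 + i) = m - i := by omega
    have e2 : 1 + i - 1 = i := by omega
    have e3 : m - i - 1 = m - 1 - i := by omega
    rw [e1, hγ (1+i), hγ (m-i), e2, e3]
    simp only [map_smul, LinearMap.smul_apply, smul_smul]
    congr 1
    have e4 : (1 + i).factorial = (i+1).factorial := by rw [Nat.add_comm]
    rw [e4]
    have e5 : m - i - 1 = m - 1 - i := by omega
    field_simp
  rw [hγn, hIcc, smul_smul, Finset.smul_sum, Finset.smul_sum, ← Finset.sum_add_distrib]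
  refine Finset.sum_eq_zero ?_
  intro i hi
  rw [mem_range] at hi
  rw [smul_smul, smul_smul, ← add_smul]
  convert zero_smul ℂ _
  have hfact : ((i+1).factorial * (m-i).factorial * ((m+1).choose (i+1)) : ℕ)
      = (m+1).factorial := by
    have := Nat.choose_mul_factorial_mul_factorial (show i+1 ≤ m+1 by omega)
    have e : m + 1 - (i+1) = m - i := by omega
    rw [e] at this
    linarith [this]
  have hsign : (-1:ℂ)^i * (-1:ℂ)^(m-1-i) = -(-1:ℂ)^m := by
    obtain ⟨a, ha⟩ : ∃ a, m - 1 - i = a := ⟨_, rfl⟩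
    have e : m = i + a + 1 := by omega
    rw [ha, e, pow_add, pow_add, pow_one]
    ring
  have hF1 : (((i+1).factorial : ℕ) : ℂ) ≠ 0 := Nat.cast_ne_zero.mpr (Nat.factorial_ne_zero _)
  have hF2 : (((m-i).factorial : ℕ) : ℂ) ≠ 0 := Nat.cast_ne_zero.mpr (Nat.factorial_ne_zero _)
  have hFn : (((m+1).factorial : ℕ) : ℂ) ≠ 0 := Nat.cast_ne_zero.mpr (Nat.factorial_ne_zero _)
  have hfactC : (((i+1).factorial : ℕ) : ℂ) * (((m-i).factorial : ℕ) : ℂ)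
      * (((m+1).choose (i+1) : ℕ) : ℂ) = (((m+1).factorial : ℕ) : ℂ) := by
    push_cast [← hfact]
    ring
  rw [hsign]
  field_simp
  linear_combination ((-1:ℂ)^m) * hfactC
end

section
/- Let 𝔤 be a real Lie algebra with underlying vector space V, let ω be a nondegenerate alternating bilinear form on 𝔤 that is closed (ω([x,y],z) + ω([y,z],x) + ω([z,x],y) = 0 for all x,y,z), and let γ : 𝔤 → End(V) be a linear map that is torsion-free (γ(x)y − γ(y)x = [x,y]), symplectic (ω(γ(x)y,z) + ω(y,γ(x)z) = 0), and flat (γ([x,y]) = γ(x)γ(y) − γ(y)γ(x)). Define on 𝔥 = 𝔤 × V the bracket [(x,u),(y,v)] = ([x,y], γ(x)v − γ(y)u), and the linear map J : 𝔥 → 𝔥 by J(x,u) = (−u,x). Then J ∘ J = −id, and the Nijenhuis expression vanishes: for all h₁,h₂ ∈ 𝔥, [J(h₁), J(h₂)] − [h₁,h₂] − J([J(h₁),h₂]) − J([h₁,J(h₂)]) = 0. -/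
/-- The almost complex structure `J(x,u) = (−u,x)` on the semi-direct product
`𝔥 = 𝔤 ⋉ V` built from a torsion-free flat symplectic connection `γ` squares
to `−id` and has vanishing Nijenhuis expression. -/
theorem semidirect_complex_structure {𝔤 : Type*} [LieRing 𝔤] [LieAlgebra ℝ 𝔤]
    (ω : 𝔤 →ₗ[ℝ] 𝔤 →ₗ[ℝ] ℝ)
    (hω_alt : ∀ x : 𝔤, ω x x = 0)
    (hω_nd : ∀ x : 𝔤, (∀ y : 𝔤, ω x y = 0) → x = 0)
    (hω_cl : ∀ x y z : 𝔤, ω ⁅x, y⁆ z + ω ⁅y, z⁆ x + ω ⁅z, x⁆ y = 0)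
    (γ : 𝔤 →ₗ[ℝ] Module.End ℝ 𝔤)
    (h_tf : ∀ x y : 𝔤, γ x y - γ y x = ⁅x, y⁆)
    (h_symp : ∀ x y z : 𝔤, ω (γ x y) z + ω y (γ x z) = 0)
    (h_flat : ∀ x y v : 𝔤, γ ⁅x, y⁆ v = γ x (γ y v) - γ y (γ x v))
    (br : (𝔤 × 𝔤) → (𝔤 × 𝔤) → (𝔤 × 𝔤))
    (hbr : ∀ x u y v : 𝔤, br (x, u) (y, v) = (⁅x, y⁆, γ x v - γ y u))
    (J : (𝔤 × 𝔤) →ₗ[ℝ] (𝔤 × 𝔤))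
    (hJ : ∀ x u : 𝔤, J (x, u) = (-u, x)) :
    (∀ h : 𝔤 × 𝔤, J (J h) = -h) ∧
    (∀ h₁ h₂ : 𝔤 × 𝔤,
      br (J h₁) (J h₂) - br h₁ h₂ - J (br (J h₁) h₂) - J (br h₁ (J h₂)) = 0) := by
  constructor
  · rintro ⟨x, u⟩
    rw [hJ, hJ, Prod.neg_mk, Prod.mk.injEq]
    exact ⟨rfl, rfl⟩
  · rintro ⟨x, u⟩ ⟨y, v⟩
    simp only [hJ, hbr, Prod.ext_iff]
    simp only [Prod.fst_sub, Prod.snd_sub, Prod.fst_zero, Prod.snd_zero]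
    constructor
    · simp only [map_neg, LinearMap.neg_apply, neg_neg, lie_neg, neg_lie]
      rw [← h_tf, ← h_tf]; abel
    · simp only [map_neg, LinearMap.neg_apply, neg_neg, lie_neg, neg_lie]
      rw [← h_tf, ← h_tf]; abel
end

section
/- Let 𝔤 be a real Lie algebra with underlying vector space V, let ω be a nondegenerate alternating bilinear form on 𝔤 that is closed (ω([x,y],z) + ω([y,z],x) + ω([z,x],y) = 0 for all x,y,z), and let γ : 𝔤 → End(V) be a linear map that is torsion-free (γ(x)y − γ(y)x = [x,y]), symplectic (ω(γ(x)y,z) + ω(y,γ(x)z) = 0), and flat (γ([x,y]) = γ(x)γ(y) − γ(y)γ(x)). Define on 𝔥 = 𝔤 × V the bracket [(x,u),(y,v)] = ([x,y], γ(x)v − γ(y)u), and the bilinear form Ω₁((x,u),(y,v)) = −ω(x,v) − ω(u,y). Then Ω₁ is alternating, nondegenerate, and closed: Ω₁([h₁,h₂],h₃) + Ω₁([h₂,h₃],h₁) + Ω₁([h₃,h₁],h₂) = 0 for all h₁,h₂,h₃ ∈ 𝔥. -/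
/-- The form `Ω₁((x,u),(y,v)) = −ω(x,v) − ω(u,y)` on the semi-direct product
`𝔥 = 𝔤 ⋉ V` is an alternating, nondegenerate, closed 2-form. -/
theorem semidirect_Omega1_symplectic {𝔤 : Type*} [LieRing 𝔤] [LieAlgebra ℝ 𝔤]
    (ω : 𝔤 →ₗ[ℝ] 𝔤 →ₗ[ℝ] ℝ)
    (hω_alt : ∀ x : 𝔤, ω x x = 0)
    (hω_nd : ∀ x : 𝔤, (∀ y : 𝔤, ω x y = 0) → x = 0)
    (hω_cl : ∀ x y z : 𝔤, ω ⁅x, y⁆ z + ω ⁅y, z⁆ x + ω ⁅z, x⁆ y = 0)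
    (γ : 𝔤 →ₗ[ℝ] Module.End ℝ 𝔤)
    (h_tf : ∀ x y : 𝔤, γ x y - γ y x = ⁅x, y⁆)
    (h_symp : ∀ x y z : 𝔤, ω (γ x y) z + ω y (γ x z) = 0)
    (h_flat : ∀ x y v : 𝔤, γ ⁅x, y⁆ v = γ x (γ y v) - γ y (γ x v))
    (br : (𝔤 × 𝔤) → (𝔤 × 𝔤) → (𝔤 × 𝔤))
    (hbr : ∀ x u y v : 𝔤, br (x, u) (y, v) = (⁅x, y⁆, γ x v - γ y u))
    (Ω₁ : (𝔤 × 𝔤) → (𝔤 × 𝔤) → ℝ)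
    (hΩ₁ : ∀ x u y v : 𝔤, Ω₁ (x, u) (y, v) = -ω x v - ω u y) :
    (∀ h : 𝔤 × 𝔤, Ω₁ h h = 0) ∧
    (∀ h : 𝔤 × 𝔤, (∀ h' : 𝔤 × 𝔤, Ω₁ h h' = 0) → h = 0) ∧
    (∀ h₁ h₂ h₃ : 𝔤 × 𝔤,
      Ω₁ (br h₁ h₂) h₃ + Ω₁ (br h₂ h₃) h₁ + Ω₁ (br h₃ h₁) h₂ = 0) := by
  have hanti : ∀ x y : 𝔤, ω x y = - ω y x := by
    intro x y
    have h := hω_alt (x + y)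
    simp only [map_add, LinearMap.add_apply, hω_alt] at h
    linarith
  refine ⟨?_, ?_, ?_⟩
  · rintro ⟨x, u⟩
    rw [hΩ₁, hanti x u]; ring
  · rintro ⟨x, u⟩ h
    have hx : x = 0 := hω_nd x (fun v => by
      have := h (0, v); rw [hΩ₁] at this; simp at this; linarith)
    have hu : u = 0 := hω_nd u (fun y => by
      have := h (y, 0); rw [hΩ₁] at this; simp at this; linarith)
    simp [hx, hu, Prod.ext_iff]
  · rintro ⟨x₁, u₁⟩ ⟨x₂, u₂⟩ ⟨x₃, u₃⟩
    have hs : ∀ x y z : 𝔤, ω (γ x y) z = - ω y (γ x z) := fun x y z => by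
      linarith [h_symp x y z]
    rw [hbr, hbr, hbr, hΩ₁, hΩ₁, hΩ₁,
        hanti ⁅x₁, x₂⁆ u₃, hanti ⁅x₂, x₃⁆ u₁, hanti ⁅x₃, x₁⁆ u₂,
        ← h_tf x₁ x₂, ← h_tf x₂ x₃, ← h_tf x₃ x₁]
    simp only [map_sub, LinearMap.sub_apply, hs]
    ring
end

section
/- Let 𝔤 be a real Lie algebra with underlying vector space V, let ω be a nondegenerate alternating bilinear form on 𝔤 that is closed (ω([x,y],z) + ω([y,z],x) + ω([z,x],y) = 0 for all x,y,z), and let γ : 𝔤 → End(V) be a linear map that is torsion-free (γ(x)y − γ(y)x = [x,y]), symplectic (ω(γ(x)y,z) + ω(y,γ(x)z) = 0), and flat (γ([x,y]) = γ(x)γ(y) − γ(y)γ(x)). Define on 𝔥 = 𝔤 × V the bracket [(x,u),(y,v)] = ([x,y], γ(x)v − γ(y)u), and the bilinear form Ω₂((x,u),(y,v)) = ω(x,y) − ω(u,v). Then Ω₂ is alternating, nondegenerate, and closed: Ω₂([h₁,h₂],h₃) + Ω₂([h₂,h₃],h₁) + Ω₂([h₃,h₁],h₂) = 0 for all h₁,h₂,h₃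 ∈ 𝔥. -/
/-- The form `Ω₂((x,u),(y,v)) = ω(x,y) − ω(u,v)` on the semi-direct product
`𝔥 = 𝔤 ⋉ V` is an alternating, nondegenerate, closed 2-form. -/
theorem semidirect_Omega2_symplectic {𝔤 : Type*} [LieRing 𝔤] [LieAlgebra ℝ 𝔤]
    (ω : 𝔤 →ₗ[ℝ] 𝔤 →ₗ[ℝ] ℝ)
    (hω_alt : ∀ x : 𝔤, ω x x = 0)
    (hω_nd : ∀ x : 𝔤, (∀ y : 𝔤, ω x y = 0) → x = 0)
    (hω_cl : ∀ x y z : 𝔤, ω ⁅x, y⁆ z + ω ⁅y, z⁆ x + ω ⁅z, x⁆ y = 0)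
    (γ : 𝔤 →ₗ[ℝ] Module.End ℝ 𝔤)
    (h_tf : ∀ x y : 𝔤, γ x y - γ y x = ⁅x, y⁆)
    (h_symp : ∀ x y z : 𝔤, ω (γ x y) z + ω y (γ x z) = 0)
    (h_flat : ∀ x y v : 𝔤, γ ⁅x, y⁆ v = γ x (γ y v) - γ y (γ x v))
    (br : (𝔤 × 𝔤) → (𝔤 × 𝔤) → (𝔤 × 𝔤))
    (hbr : ∀ x u y v : 𝔤, br (x, u) (y, v) = (⁅x, y⁆, γ x v - γ y u))
    (Ω₂ : (𝔤 × 𝔤) → (𝔤 × 𝔤) → ℝ)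
    (hΩ₂ : ∀ x u y v : 𝔤, Ω₂ (x, u) (y, v) = ω x y - ω u v) :
    (∀ h : 𝔤 × 𝔤, Ω₂ h h = 0) ∧
    (∀ h : 𝔤 × 𝔤, (∀ h' : 𝔤 × 𝔤, Ω₂ h h' = 0) → h = 0) ∧
    (∀ h₁ h₂ h₃ : 𝔤 × 𝔤,
      Ω₂ (br h₁ h₂) h₃ + Ω₂ (br h₂ h₃) h₁ + Ω₂ (br h₃ h₁) h₂ = 0) := by
  have hskew : ∀ a b : 𝔤, ω a b = - ω b a := by
    intro a b
    have h := hω_alt (a + b)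
    simp [map_add, hω_alt a, hω_alt b] at h
    linarith
  refine ⟨?_, ?_, ?_⟩
  · rintro ⟨x, u⟩
    rw [hΩ₂, hω_alt, hω_alt]; ring
  · rintro ⟨x, u⟩ h
    have hx : x = 0 := by
      apply hω_nd; intro y
      have := h (y, 0)
      rw [hΩ₂] at this
      simpa using this
    have hu : u = 0 := by
      apply hω_nd; intro v
      have := h (0, v)
      rw [hΩ₂] at this
      simp at this
      linarith
    simp [hx, hu, Prod.ext_iff]
  · rintro ⟨x, u⟩ ⟨y, v⟩ ⟨z, w⟩
    rw [hbr, hbr, hbr, hΩ₂, hΩ₂, hΩ₂]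
    have hcl := hω_cl x y z
    have s1 : ω (γ x v) w = ω (γ x w) v := by
      have h1 := h_symp x v w
      have h2 := hskew v (γ x w)
      linarith
    have s2 : ω (γ y u) w = ω (γ y w) u := by
      have h1 := h_symp y u w
      have h2 := hskew u (γ y w)
      linarith
    have s3 : ω (γ z v) u = ω (γ z u) v := by
      have h1 := h_symp z v u
      have h2 := hskew v (γ z u)
      linarith
    simp only [map_sub, LinearMap.sub_apply]
    linarith
end

section
/- Let 𝔤 be a real Lie algebra with underlying vector space V, let ω be a nondegenerate alternating bilinear form on 𝔤 that is closed (ω([x,y],z) + ω([y,z],x) + ω([z,x],y) = 0 for all x,y,z), and let γ : 𝔤 → End(V) be a linear map that is torsion-free (γ(x)y − γ(y)x = [x,y]), symplectic (ω(γ(x)y,z) + ω(y,γ(x)z) = 0), and flat (γ([x,y]) = γ(x)γ(y) − γ(y)γ(x)). Define on 𝔥 = 𝔤 × V the bracket [(x,u),(y,v)] = ([x,y], γ(x)v − γ(y)u), and the bilinear form Ω₃((x,u),(y,v)) = ω(x,y) + ω(u,v). Then Ω₃ is alternating, nondegenerate, and closed: Ω₃([h₁,h₂],h₃) + Ω₃([h₂,h₃],h₁)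 + Ω₃([h₃,h₁],h₂) = 0 for all h₁,h₂,h₃ ∈ 𝔥. -/
/-- The form `Ω₃((x,u),(y,v)) = ω(x,y) + ω(u,v)` on the semi-direct product
`𝔥 = 𝔤 ⋉ V` is an alternating, nondegenerate, closed 2-form. -/
theorem semidirect_Omega3_symplectic {𝔤 : Type*} [LieRing 𝔤] [LieAlgebra ℝ 𝔤]
    (ω : 𝔤 →ₗ[ℝ] 𝔤 →ₗ[ℝ] ℝ)
    (hω_alt : ∀ x : 𝔤, ω x x = 0)
    (hω_nd : ∀ x : 𝔤, (∀ y : 𝔤, ω x y = 0) → x = 0)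
    (hω_cl : ∀ x y z : 𝔤, ω ⁅x, y⁆ z + ω ⁅y, z⁆ x + ω ⁅z, x⁆ y = 0)
    (γ : 𝔤 →ₗ[ℝ] Module.End ℝ 𝔤)
    (h_tf : ∀ x y : 𝔤, γ x y - γ y x = ⁅x, y⁆)
    (h_symp : ∀ x y z : 𝔤, ω (γ x y) z + ω y (γ x z) = 0)
    (h_flat : ∀ x y v : 𝔤, γ ⁅x, y⁆ v = γ x (γ y v) - γ y (γ x v))
    (br : (𝔤 × 𝔤) → (𝔤 × 𝔤) → (𝔤 × 𝔤))
    (hbr : ∀ x u y v : 𝔤, br (x, u) (y, v) = (⁅x, y⁆, γ x v - γ y u))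
    (Ω₃ : (𝔤 × 𝔤) → (𝔤 × 𝔤) → ℝ)
    (hΩ₃ : ∀ x u y v : 𝔤, Ω₃ (x, u) (y, v) = ω x y + ω u v) :
    (∀ h : 𝔤 × 𝔤, Ω₃ h h = 0) ∧
    (∀ h : 𝔤 × 𝔤, (∀ h' : 𝔤 × 𝔤, Ω₃ h h' = 0) → h = 0) ∧
    (∀ h₁ h₂ h₃ : 𝔤 × 𝔤,
      Ω₃ (br h₁ h₂) h₃ + Ω₃ (br h₂ h₃) h₁ + Ω₃ (br h₃ h₁) h₂ = 0) := by
  have hskew : ∀ a b : 𝔤, ω a b = -ω b a := by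
    intro a b
    have h := hω_alt (a + b)
    simp [map_add, hω_alt] at h
    linarith
  refine ⟨?_, ?_, ?_⟩
  · rintro ⟨x, u⟩
    rw [hΩ₃, hω_alt, hω_alt, add_zero]
  · rintro ⟨x, u⟩ h
    have hx : x = 0 := by
      apply hω_nd; intro y
      have := h (y, 0)
      rw [hΩ₃] at this
      simpa using this
    have hu : u = 0 := by
      apply hω_nd; intro v
      have := h (0, v)
      rw [hΩ₃] at this
      simpa using this
    simp [hx, hu, Prod.ext_iff]
  · rintro ⟨x₁, u₁⟩ ⟨x₂, u₂⟩ ⟨x₃, u₃⟩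
    rw [hbr, hbr, hbr, hΩ₃, hΩ₃, hΩ₃]
    have hcl := hω_cl x₁ x₂ x₃
    -- ω(γ x u) v = ω(γ x v) u
    have key : ∀ x u v : 𝔤, ω (γ x u) v = ω (γ x v) u := by
      intro x u v
      have h1 := h_symp x u v
      have h2 := hskew u (γ x v)
      linarith
    have e1 := key x₁ u₂ u₃
    have e2 := key x₂ u₃ u₁
    have e3 := key x₃ u₁ u₂
    simp only [map_sub, LinearMap.sub_apply]
    linarith
end

section
/- Let 𝔤 be a real Lie algebra with underlying vector space V, let ω be a nondegenerate alternating bilinear form on 𝔤 that is closed (ω([x,y],z) + ω([y,z],x) + ω([z,x],y) = 0 for all x,y,z), and let γ : 𝔤 → End(V) be a linear map that is torsion-free (γ(x)y − γ(y)x = [x,y]), symplectic (ω(γ(x)y,z) + ω(y,γ(x)z) = 0), and flat (γ([x,y]) = γ(x)γ(y) − γ(y)γ(x)). Let g be a nondegenerate symmetric bilinear form on 𝔤. Define on 𝔥 = 𝔤 × V the bracket [(x,u),(y,v)] = ([x,y], γ(x)v − γ(y)u) and the bilinear form Ω₄((x,u),(y,v)) = g(x,v) − g(y,u). Then Ω₄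 is closed (Ω₄([h₁,h₂],h₃) + Ω₄([h₂,h₃],h₁) + Ω₄([h₃,h₁],h₂) = 0 for all h₁,h₂,h₃ ∈ 𝔥) if and only if for all x,y,w ∈ 𝔤: g(γ(x)y,w) − g(γ(y)x,w) − g(x,γ(y)w) + g(y,γ(x)w) = 0. -/
/-- The form `Ω₄((x,u),(y,v)) = g(x,v) − g(y,u)` on the semi-direct product
`𝔥 = 𝔤 ⋉ V` is closed if and only if
`g(γ(x)y,w) − g(γ(y)x,w) − g(x,γ(y)w) + g(y,γ(x)w) = 0` for all `x,y,w`. -/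
theorem semidirect_Omega4_closed_iff {𝔤 : Type*} [LieRing 𝔤] [LieAlgebra ℝ 𝔤]
    (ω : 𝔤 →ₗ[ℝ] 𝔤 →ₗ[ℝ] ℝ)
    (hω_alt : ∀ x : 𝔤, ω x x = 0)
    (hω_nd : ∀ x : 𝔤, (∀ y : 𝔤, ω x y = 0) → x = 0)
    (hω_cl : ∀ x y z : 𝔤, ω ⁅x, y⁆ z + ω ⁅y, z⁆ x + ω ⁅z, x⁆ y = 0)
    (γ : 𝔤 →ₗ[ℝ] Module.End ℝ 𝔤)
    (h_tf : ∀ x y : 𝔤, γ x y - γ y x = ⁅x, y⁆)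
    (h_symp : ∀ x y z : 𝔤, ω (γ x y) z + ω y (γ x z) = 0)
    (h_flat : ∀ x y v : 𝔤, γ ⁅x, y⁆ v = γ x (γ y v) - γ y (γ x v))
    (g : 𝔤 →ₗ[ℝ] 𝔤 →ₗ[ℝ] ℝ)
    (hg_symm : ∀ x y : 𝔤, g x y = g y x)
    (hg_nd : ∀ x : 𝔤, (∀ y : 𝔤, g x y = 0) → x = 0)
    (br : (𝔤 × 𝔤) → (𝔤 × 𝔤) → (𝔤 × 𝔤))
    (hbr : ∀ x u y v : 𝔤, br (x, u) (y, v) = (⁅x, y⁆, γ x v - γ y u))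
    (Ω₄ : (𝔤 × 𝔤) → (𝔤 × 𝔤) → ℝ)
    (hΩ₄ : ∀ x u y v : 𝔤, Ω₄ (x, u) (y, v) = g x v - g y u) :
    (∀ h₁ h₂ h₃ : 𝔤 × 𝔤,
        Ω₄ (br h₁ h₂) h₃ + Ω₄ (br h₂ h₃) h₁ + Ω₄ (br h₃ h₁) h₂ = 0)
      ↔ (∀ x y w : 𝔤,
          g (γ x y) w - g (γ y x) w - g x (γ y w) + g y (γ x w) = 0) := by
  constructor
  · intro H x y w
    have h := H (x, 0) (y, 0) (0, w)
    simp only [hbr, hΩ₄, map_zero, LinearMap.zero_apply, sub_zero, zero_sub] at h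
    have hb : g ⁅x, y⁆ w = g (γ x y) w - g (γ y x) w := by
      rw [← h_tf, map_sub, LinearMap.sub_apply]
    simp only [map_neg] at h
    linarith [hb, h]
  · rintro C ⟨x, u⟩ ⟨y, v⟩ ⟨z, w⟩
    simp only [hbr, hΩ₄]
    have e1 : g ⁅x, y⁆ w = g (γ x y) w - g (γ y x) w := by
      rw [← h_tf, map_sub, LinearMap.sub_apply]
    have e2 : g ⁅y, z⁆ u = g (γ y z) u - g (γ z y) u := by
      rw [← h_tf, map_sub, LinearMap.sub_apply]
    have e3 : g ⁅z, x⁆ v = g (γ z x) v - g (γ x z) v := by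
      rw [← h_tf, map_sub, LinearMap.sub_apply]
    have m1 : g z (γ x v - γ y u) = g z (γ x v) - g z (γ y u) := by rw [map_sub]
    have m2 : g x (γ y w - γ z v) = g x (γ y w) - g x (γ z v) := by rw [map_sub]
    have m3 : g y (γ z u - γ x w) = g y (γ z u) - g y (γ x w) := by rw [map_sub]
    have c1 := C x y w
    have c2 := C y z u
    have c3 := C z x v
    rw [e1, e2, e3, m1, m2, m3]
    have s1 : g z (γ y u) = g (γ y u) z := hg_symm _ _
    have s2 : g z (γ x v) = g (γ x v) z := hg_symm _ _
    nlinarith [hg_symm z (γ y u), hg_symm z (γ x v), hg_symm u (γ z y), hg_symm v (γ z x),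
      hg_symm x (γ z v), hg_symm y (γ z u), hg_symm z (γ y u), hg_symm z (γ x v)]
end
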